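/- For every integer R ≥ 6, (R·log(R·log R + 1) + 2·log R)·(1 + 1/(R² - 1)) < R·(log R + log log R + 0.8), where log denotes the natural logarithm. -/

import Mathlib

lemma log6_ub : Real.log 6 ≤ 9/5 := by
  have h5 : (6:ℝ)^(5:ℕ) < (Real.exp (9/5))^(5:ℕ) := by
    have he : (Real.exp (9/5))^(5:ℕ) = Real.exp 9 := by
      rw [← Real.exp_nat_mul]; norm_num
    rw [he]
    have h9 : Real.exp 9 = (Real.exp 1)^(9:ℕ) := by rw [← Real.exp_nat_mul]; norm_num
    rw [h9]
    calc (6:ℝ)^(5:ℕ) = 7776 := by norm_num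
    _ < (2.7182818283)^(9:ℕ) := by norm_num
    _ < (Real.exp 1)^(9:ℕ) := by
        exact pow_lt_pow_left₀ Real.exp_one_gt_d9 (by norm_num) (by omega)
  have h6 : (6:ℝ) < Real.exp (9/5) := lt_of_pow_lt_pow_left₀ 5 (Real.exp_pos _).le h5
  have := Real.log_le_log (by norm_num) h6.le
  rwa [Real.log_exp] at this

lemma log6_lb : 7/4 ≤ Real.log 6 := by
  have h4 : (Real.exp (7/4))^(4:ℕ) ≤ (6:ℝ)^(4:ℕ) := by
    have he : (Real.exp (7/4))^(4:ℕ) = Real.exp 7 := by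
      rw [← Real.exp_nat_mul]; norm_num
    rw [he]
    have h7 : Real.exp 7 = (Real.exp 1)^(7:ℕ) := by rw [← Real.exp_nat_mul]; norm_num
    rw [h7]
    calc (Real.exp 1)^(7:ℕ) ≤ (2.7182818286)^(7:ℕ) :=
          pow_le_pow_left₀ (Real.exp_pos _).le Real.exp_one_lt_d9.le _
    _ ≤ (6:ℝ)^(4:ℕ) := by norm_num
  have h6 : Real.exp (7/4) ≤ 6 := le_of_pow_le_pow_left₀ (by norm_num) (by norm_num) h4
  have := Real.log_le_log (Real.exp_pos _) h6
  rwa [Real.log_exp] at this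

/-- Core algebraic estimate with all logarithms abstracted away. -/
lemma aux_ineq (x L l y : ℝ) (hx : 6 ≤ x) (hL_lb : 7/4 ≤ L)
    (hL_ub : L ≤ 4/5 + x/6) (hl : l ≤ L - 1)
    (hy : y ≤ L + l + 1/(x*L)) :
    (x * y + 2 * L) * (1 + 1/(x^2-1)) < x * (L + l + 0.8) := by
  have hx0 : (0:ℝ) < x := by linarith
  have hL_pos : (0:ℝ) < L := by linarith
  have hxL_pos : 0 < x * L := mul_pos hx0 hL_pos
  have hx2 : (35:ℝ) ≤ x^2 - 1 := by nlinarith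
  set u : ℝ := 1/(x^2-1) with hudef
  have hu_pos : 0 < u := by rw [hudef]; positivity
  have hu_ub : u ≤ 1/35 := by
    rw [hudef]
    exact div_le_div_of_nonneg_left (by norm_num) (by linarith) hx2
  have h1pu : (0:ℝ) < 1 + u := by linarith
  have hu : u * (x^2 - 1) = 1 := by
    rw [hudef]; field_simp
  have hx36 : (36:ℝ) ≤ x^2 := by nlinarith
  have hx6 : 6*x ≤ x^2 := by nlinarith
  have hxxu : x^2 * u ≤ 36/35 := by nlinarith [hu, hu_ub]
  have hv_ub : 1/L ≤ 4/7 := by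
    rw [div_le_div_iff₀ hL_pos (by norm_num)]; linarith
  have hv_pos : 0 < 1/L := by positivity
  have hLub2 : 2*L ≤ 8/5 + x/3 := by linarith
  -- key estimate
  have key : 1/L + 2*L + (x*(L+l) + 1/L + 2*L) * u < 0.8 * x := by
    have b1 : x*(L+l) ≤ 13/30 * x^2 := by
      nlinarith [mul_le_mul_of_nonneg_left hl hx0.le, mul_le_mul_of_nonneg_left hL_ub hx0.le]
    have t1 : (x*(L+l)) * u ≤ (13/30 * x^2) * u :=
      mul_le_mul_of_nonneg_right b1 hu_pos.le
    have t1' : (13/30 * x^2) * u ≤ 13/30 * (36/35) := by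
      calc (13/30 * x^2) * u = 13/30 * (x^2 * u) := by ring
      _ ≤ 13/30 * (36/35) := by linarith
    have b2 : 1/L + 2*L ≤ 73/630 * x^2 := by linarith
    have t2 : (1/L + 2*L) * u ≤ (73/630 * x^2) * u :=
      mul_le_mul_of_nonneg_right b2 hu_pos.le
    have t2' : (73/630 * x^2) * u ≤ 73/630 * (36/35) := by
      calc (73/630 * x^2) * u = 73/630 * (x^2 * u) := by ring
      _ ≤ 73/630 * (36/35) := by linarith
    have hexp : (x*(L+l) + 1/L + 2*L) * u = (x*(L+l))*u + (1/L + 2*L)*u := by ring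
    rw [hexp]
    linarith
  -- main strict inequality
  have hxinv : x * (1/(x*L)) = 1/L := by
    rw [mul_one_div, div_eq_div_iff hxL_pos.ne' hL_pos.ne']; ring
  have expand : (x * (L + l + 1/(x*L)) + 2 * L) * (1 + u)
      = x*(L+l) + 1/L + 2*L + (x*(L+l) + 1/L + 2*L) * u := by
    linear_combination (1+u) * hxinv
  have hle : (x * y + 2 * L) * (1 + u)
      ≤ (x * (L + l + 1/(x*L)) + 2 * L) * (1 + u) := by
    apply mul_le_mul_of_nonneg_right _ h1pu.le
    have := mul_le_mul_of_nonneg_left hy hx0.le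
    linarith
  calc (x * y + 2 * L) * (1 + u)
      ≤ (x * (L + l + 1/(x*L)) + 2 * L) * (1 + u) := hle
    _ = x*(L+l) + 1/L + 2*L + (x*(L+l) + 1/L + 2*L) * u := expand
    _ < x*(L+l) + 0.8 * x := by linarith
    _ = x * (L + l + 0.8) := by ring

/-- numerical inequality for integers `R ≥ 6`. -/
theorem numeric_ineq (R : ℕ) (hR : 6 ≤ R) :
    ((R : ℝ) * Real.log ((R : ℝ) * Real.log R + 1) + 2 * Real.log R)
        * (1 + 1 / ((R : ℝ) ^ 2 - 1))
      < (R : ℝ) * (Real.log R + Real.log (Real.log R) + 0.8) := by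
  have hx : (6:ℝ) ≤ (R:ℝ) := by exact_mod_cast hR
  have hx0 : (0:ℝ) < (R:ℝ) := by linarith
  have hL_lb : 7/4 ≤ Real.log R := le_trans log6_lb (Real.log_le_log (by norm_num) hx)
  have hL_pos : 0 < Real.log R := by linarith
  have hL_ub : Real.log R ≤ 4/5 + (R:ℝ)/6 := by
    have h1 : Real.log ((R:ℝ)/6) ≤ (R:ℝ)/6 - 1 := Real.log_le_sub_one_of_pos (by linarith)
    have h2 : Real.log ((R:ℝ)/6) = Real.log R - Real.log 6 :=
      Real.log_div (by linarith) (by norm_num)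
    have := log6_ub
    linarith
  have hl : Real.log (Real.log R) ≤ Real.log R - 1 := Real.log_le_sub_one_of_pos hL_pos
  have hxL_pos : 0 < (R:ℝ) * Real.log R := mul_pos hx0 hL_pos
  have hy : Real.log ((R:ℝ) * Real.log R + 1)
      ≤ Real.log R + Real.log (Real.log R) + 1/((R:ℝ) * Real.log R) := by
    have h1 : Real.log (((R:ℝ)*Real.log R + 1)/((R:ℝ)*Real.log R))
        ≤ ((R:ℝ)*Real.log R + 1)/((R:ℝ)*Real.log R) - 1 :=
      Real.log_le_sub_one_of_pos (by positivity)
    have h2 : Real.log (((R:ℝ)*Real.log R + 1)/((R:ℝ)*Real.log R))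
        = Real.log ((R:ℝ)*Real.log R + 1) - Real.log ((R:ℝ)*Real.log R) :=
      Real.log_div (by positivity) (ne_of_gt hxL_pos)
    have h3 : Real.log ((R:ℝ)*Real.log R) = Real.log R + Real.log (Real.log R) :=
      Real.log_mul (ne_of_gt hx0) (ne_of_gt hL_pos)
    have h4 : ((R:ℝ)*Real.log R + 1)/((R:ℝ)*Real.log R) - 1 = 1/((R:ℝ)*Real.log R) := by
      field_simp
      ring
    linarith
  exact aux_ineq (R:ℝ) (Real.log R) (Real.log (Real.log R))
    (Real.log ((R:ℝ) * Real.log R + 1)) hx hL_lb hL_ub hl hy
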